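/- (Expansive replacement method.) Let A be a mixed orthogonal array of strength k with r rows and N columns whose first column takes values in an alphabet of size d₁, and let B be a mixed orthogonal array of strength k with exactly d₁ rows and N_B columns of alphabet sizes f₁,…,f_{N_B}. Fix a bijection between the d₁ symbols of the first column of A and the rows of B, and let C be the r × (N − 1 + N_B) array obtained from A by replacing each entry of its first column by the corresponding row of B. Then C is a mixed orthogonal array of strength k, namely an MOA(r, N−1+N_B, f₁¹⋯f_{N_B}¹d₂¹⋯d_N¹, k). -/

import Mathlib

open Finset

/-- The Hamming distance between two rows of an array: the number of columns
in which the rows differ. -/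
def hamDist {ι κ : Type*} [Fintype κ] (A : ι → κ → ℕ) (i i' : ι) : ℕ :=
  (Finset.univ.filter fun j => A i j ≠ A i' j).card

/-- `MD(A)`: the minimum Hamming distance over all pairs of distinct rows. -/
noncomputable def minDist {ι κ : Type*} [Fintype κ] (A : ι → κ → ℕ) : ℕ :=
  sInf {n | ∃ i i', i ≠ i' ∧ hamDist A i i' = n}

/-- `A` is a mixed orthogonal array of strength `k` (rows indexed by `ι`,
columns by `κ`, column `j` taking values in `{0, …, lv j − 1}`): in the
subarray given by any choice of at most `k` columns, every tuple of symbols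
occurs equally often as a row, namely (number of rows)/(product of the levels
of the chosen columns) times. -/
def IsMOA {ι κ : Type*} [Fintype ι] [Fintype κ] [DecidableEq κ]
    (A : ι → κ → ℕ) (lv : κ → ℕ) (k : ℕ) : Prop :=
  (∀ i j, A i j < lv j) ∧
  ∀ S : Finset κ, S.card ≤ k → ∀ x : κ → ℕ, (∀ j ∈ S, x j < lv j) →
    (Finset.univ.filter fun i : ι => ∀ j ∈ S, A i j = x j).card * ∏ j ∈ S, lv j
      = Fintype.card ι

/-- An irredundant mixed orthogonal array of strength `k`: an MOA of strength
`k` any two distinct rows of which have Hamming distance at least `k+1`. -/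
def IsIrMOA {ι κ : Type*} [Fintype ι] [Fintype κ] [DecidableEq κ]
    (A : ι → κ → ℕ) (lv : κ → ℕ) (k : ℕ) : Prop :=
  IsMOA A lv k ∧ ∀ i i' : ι, i ≠ i' → k + 1 ≤ hamDist A i i'

/-- A difference scheme `D(r, c, d)`: an `r × c` matrix over `ℤ_d` such that
for any two distinct columns the `r` differences of corresponding entries
take each value of `ℤ_d` exactly `r/d` times. -/
def IsDiffScheme {r c d : ℕ} (B : Fin r → Fin c → ZMod d) : Prop :=
  ∀ j j' : Fin c, j ≠ j' → ∀ g : ZMod d,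
    (Finset.univ.filter fun i : Fin r => B i j - B i j' = g).card * d = r

/-- **expansive replacement method.** Let `A` be an MOA of
strength `k` whose columns are `Unit ⊕ Fin N₀` (the distinguished first column
having `d₁` levels, the remaining `N₀` columns having levels `lv₀`), and let
`B` be an MOA of strength `k` with `d₁` rows and `N_B` columns of levels
`lvB`. Replacing each entry of the first column of `A` by the corresponding
row of `B` yields an MOA of strength `k` on `N_B + N₀` columns, of level type
`f₁¹⋯f_{N_B}¹d₂¹⋯d_N¹`. -/
theorem statement3 {r N₀ NB d₁ k : ℕ}
    (A : Fin r → (Unit ⊕ Fin N₀) → ℕ) (lv₀ : Fin N₀ → ℕ)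
    (hA : IsMOA A (Sum.elim (fun _ => d₁) lv₀) k)
    (B : ℕ → Fin NB → ℕ) (lvB : Fin NB → ℕ)
    (hB : IsMOA (fun a : Fin d₁ => B a.val) lvB k) :
    IsMOA
      (fun i : Fin r =>
        Sum.elim (fun jb : Fin NB => B (A i (Sum.inl ())) jb)
          (fun j : Fin N₀ => A i (Sum.inr j)))
      (Sum.elim lvB lv₀) k := by
  obtain ⟨hAb, hAc⟩ := hA
  obtain ⟨hBb, hBc⟩ := hB
  constructor
  · rintro i (jb | j)
    · exact hBb ⟨A i (Sum.inl ()), hAb i (Sum.inl ())⟩ jb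
    · exact hAb i (Sum.inr j)
  intro S hS x hx
  rcases Nat.eq_zero_or_pos r with hr | hr
  · subst hr
    simp [Finset.filter_eq_empty_iff]
  have hd₁ : 0 < d₁ := lt_of_le_of_lt (Nat.zero_le _) (hAb ⟨0, hr⟩ (Sum.inl ()))
  set S₁ := S.toLeft with hS₁
  set S₂ := S.toRight with hS₂def
  have hSeq : S = S₁.disjSum S₂ := (Finset.toLeft_disjSum_toRight (u := S)).symm
  have hcards : S₁.card + S₂.card = S.card := Finset.card_toLeft_add_card_toRight
  -- rewrite the condition
  have hcond : ∀ i : Fin r, (∀ j ∈ S,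
      Sum.elim (fun jb : Fin NB => B (A i (Sum.inl ())) jb)
        (fun j : Fin N₀ => A i (Sum.inr j)) j = x j) ↔
      ((∀ jb ∈ S₁, B (A i (Sum.inl ())) jb = x (Sum.inl jb)) ∧
        (∀ j ∈ S₂, A i (Sum.inr j) = x (Sum.inr j))) := by
    intro i
    rw [hSeq]
    constructor
    · intro h
      refine ⟨fun jb hjb => h _ (Finset.inl_mem_disjSum.2 hjb),
        fun j hj => h _ (Finset.inr_mem_disjSum.2 hj)⟩
    · rintro ⟨h1, h2⟩ (jb | j) hj
      · exact h1 jb (Finset.inl_mem_disjSum.1 hj)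
      · exact h2 j (Finset.inr_mem_disjSum.1 hj)
  have hprod : ∏ j ∈ S, Sum.elim lvB lv₀ j
      = (∏ jb ∈ S₁, lvB jb) * ∏ j ∈ S₂, lv₀ j := by
    rw [hSeq, Finset.prod_sumElim]
  rw [Finset.filter_congr (fun i _ => by
    simpa using (hcond i)), hprod]
  rcases Finset.eq_empty_or_nonempty S₁ with h1 | h1
  · -- no column of B chosen
    have hk : S₂.card ≤ k := by
      omega
    have := hAc (S₂.map ⟨Sum.inr, Sum.inr_injective⟩)
      (by simpa using hk)
      (Sum.elim (fun _ => 0) (fun j => x (Sum.inr j)))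
      (by
        rintro (⟨⟩ | j) hj
        · simp at hj
        · simp only [Finset.mem_map, Function.Embedding.coeFn_mk] at hj
          obtain ⟨j', hj', hjj⟩ := hj
          cases hjj
          exact hx _ (by rw [hSeq]; exact Finset.inr_mem_disjSum.2 hj'))
    simp only [Finset.forall_mem_map, Function.Embedding.coeFn_mk, Sum.elim_inr,
      Finset.prod_map] at this
    simp only [h1, Finset.notMem_empty, false_implies, implies_true, true_and,
      Finset.prod_empty, one_mul]
    simpa using this
  · -- at least one column of B chosen
    have hk2 : S₂.card + 1 ≤ k := by
      have := Finset.card_pos.2 h1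
      omega
    set T := Finset.univ.filter
      (fun a : Fin d₁ => ∀ jb ∈ S₁, B a.val jb = x (Sum.inl jb)) with hT
    have hTcard : T.card * ∏ jb ∈ S₁, lvB jb = d₁ := by
      have := hBc S₁ (by omega) (fun jb => x (Sum.inl jb))
        (fun jb hjb => by
          exact hx _ (by rw [hSeq]; exact Finset.inl_mem_disjSum.2 hjb))
      rw [Fintype.card_fin] at this
      rw [hT]
      convert this using 3
      ext a
      simp only [Finset.mem_filter]
    set m : Fin d₁ → ℕ := fun a => (Finset.univ.filter
      (fun i : Fin r => A i (Sum.inl ()) = a.val ∧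
        ∀ j ∈ S₂, A i (Sum.inr j) = x (Sum.inr j))).card with hm
    have hma : ∀ a : Fin d₁, m a * (d₁ * ∏ j ∈ S₂, lv₀ j) = r := by
      intro a
      have hnotmem : Sum.inl () ∉ S₂.map ⟨Sum.inr, Sum.inr_injective⟩ := by simp
      have := hAc (insert (Sum.inl ()) (S₂.map ⟨Sum.inr, Sum.inr_injective⟩))
        (by
          rw [Finset.card_insert_of_notMem hnotmem, Finset.card_map]
          omega)
        (Sum.elim (fun _ => a.val) (fun j => x (Sum.inr j)))
        (by
          rintro (⟨⟩ | j) hj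
          · exact a.isLt
          · simp only [Finset.mem_insert, Finset.mem_map,
              Function.Embedding.coeFn_mk] at hj
            rcases hj with hj | ⟨j', hj', hjj⟩
            · exact absurd hj (by simp)
            · cases hjj
              exact hx _ (by rw [hSeq]; exact Finset.inr_mem_disjSum.2 hj'))
      rw [Finset.prod_insert hnotmem] at this
      simp only [Finset.forall_mem_insert, Finset.forall_mem_map,
        Function.Embedding.coeFn_mk, Sum.elim_inl, Sum.elim_inr,
        Finset.prod_map, Fintype.card_fin] at this
      rw [hm]
      exact this
    -- fiberwise counting
    have hfib : (Finset.univ.filter fun i : Fin r =>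
        (∀ jb ∈ S₁, B (A i (Sum.inl ())) jb = x (Sum.inl jb)) ∧
          (∀ j ∈ S₂, A i (Sum.inr j) = x (Sum.inr j))).card
        = ∑ a ∈ T, m a := by
      refine Finset.card_eq_sum_card_fiberwise
        (f := fun i : Fin r => (⟨A i (Sum.inl ()), by simpa using hAb i (Sum.inl ())⟩ : Fin d₁))
        (fun i hi => ?_) |>.trans (Finset.sum_congr rfl fun a ha => ?_)
      · simp only [Finset.mem_coe, Finset.mem_filter] at hi
        simp only [hT, Finset.mem_coe, Finset.mem_filter, Finset.mem_univ, true_and]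
        exact hi.2.1
      · simp only [hT, Finset.mem_filter, Finset.mem_univ, true_and] at ha
        rw [hm, Finset.filter_filter]
        congr 1
        apply Finset.filter_congr
        intro i _
        constructor
        · rintro ⟨⟨h1', h2'⟩, h3'⟩
          refine ⟨by rw [← h3'], h2'⟩
        · rintro ⟨h1', h2'⟩
          have hA' : (⟨A i (Sum.inl ()), hAb i (Sum.inl ())⟩ : Fin d₁) = a :=
            Fin.ext h1'
          refine ⟨⟨fun jb hjb => by rw [h1']; exact ha jb hjb, h2'⟩, hA'⟩
    rw [hfib, Fintype.card_fin]
    have key : (∑ a ∈ T, m a) * (d₁ * ∏ j ∈ S₂, lv₀ j) = T.card * r := by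
      rw [Finset.sum_mul, Finset.sum_congr rfl fun a _ => hma a,
        Finset.sum_const, smul_eq_mul]
    apply Nat.eq_of_mul_eq_mul_left hd₁
    calc d₁ * ((∑ a ∈ T, m a) * ((∏ jb ∈ S₁, lvB jb) * ∏ j ∈ S₂, lv₀ j))
        = ((∑ a ∈ T, m a) * (d₁ * ∏ j ∈ S₂, lv₀ j)) * ∏ jb ∈ S₁, lvB jb := by
          ring
      _ = T.card * r * ∏ jb ∈ S₁, lvB jb := by rw [key]
      _ = (T.card * ∏ jb ∈ S₁, lvB jb) * r := by ring
      _ = d₁ * r := by rw [hTcard]
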